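/- Assume Properties 3 and 4. For every finite sequence of detailed reactions in R transforming a finite multiset A consisting of resting complexes into a finite multiset B consisting of resting complexes (each step removes the reactant multiset of one reaction of R from the current multiset of complexes and adds its product multiset), there exists a finite multiset B̂ of resting sets with B ~ B̂ and a finite sequence of condensed reactions transforming Â = the multiset {SCC(a) : a ∈ A} into B̂ (each step removes the reactant multiset of one condensed reaction from the current multiset of resting sets and adds its product multiset). -/

import Mathlib

/-- A reaction: a pair (reactants, products) of finite multisets of complexes. -/
abbrev Rxn (C : Type*) := Multiset C × Multiset C

variable {C : Type*}

/-- Edge of the fast-reaction digraph Γ: a fast (1,1) reaction ({x}, {y}) in R. -/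
def FastEdge (R : Set (Rxn C)) (x y : C) : Prop :=
  ((({x} : Multiset C), ({y} : Multiset C)) : Rxn C) ∈ R

/-- Reachability along Γ. -/
def Reach (R : Set (Rxn C)) : C → C → Prop :=
  Relation.ReflTransGen (FastEdge R)

/-- The strongly connected component of Γ containing x. -/
def scc (R : Set (Rxn C)) (x : C) : Set C :=
  {y | Reach R x y ∧ Reach R y x}

/-- Q is a resting set: an SCC of Γ all of whose outgoing fast reactions stay in Q. -/
def IsRestingSet (R : Set (Rxn C)) (Q : Set C) : Prop :=
  (∃ x, Q = scc R x) ∧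
    ∀ r ∈ R, r.1.card = 1 → (∀ a ∈ r.1, a ∈ Q) → ∀ b ∈ r.2, b ∈ Q

/-- x is a resting complex: a member of some resting set. -/
def RestingComplex (R : Set (Rxn C)) (x : C) : Prop :=
  ∃ Q, IsRestingSet R Q ∧ x ∈ Q

/-- One step of a fast transition: replace one occurrence of x by the products of a
fast reaction ({x}, P) ∈ R. -/
def FastStep (R : Set (Rxn C)) (M N : Multiset C) : Prop :=
  ∃ (x : C) (P M' : Multiset C),
    ((({x} : Multiset C), P) : Rxn C) ∈ R ∧ M = x ::ₘ M' ∧ N = P + M'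

/-- A fast transition: finitely many fast steps. -/
def FastTransition (R : Set (Rxn C)) : Multiset C → Multiset C → Prop :=
  Relation.ReflTransGen (FastStep R)

/-- The fate predicate Fate(x, F), for x a complex and F a finite multiset of resting sets. -/
inductive Fate (R : Set (Rxn C)) : C → Multiset (Set C) → Prop
  | resting (x : C) (h : IsRestingSet R (scc R x)) :
      Fate R x {scc R x}
  | step (x a : C) (l : List (C × Multiset (Set C)))
      (hnr : ¬ IsRestingSet R (scc R x))
      (ha : a ∈ scc R x)
      (hr : ((({a} : Multiset C), (↑(l.map Prod.fst) : Multiset C)) : Rxn C) ∈ R)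
      (hout : ∃ b ∈ l.map Prod.fst, b ∉ scc R x)
      (hf : ∀ p ∈ l, Fate R p.1 p.2) :
      Fate R x (l.map Prod.snd).sum

/-- B ~ F : the multiset B of complexes represents the multiset F of resting sets,
i.e. there is a bijective matching pairing each b ∈ B with a Q ∈ F with b ∈ Q. -/
def Represents (B : Multiset C) (F : Multiset (Set C)) : Prop :=
  Multiset.Rel (fun b Q => b ∈ Q) B F

/-- F is a fate of the multiset P of complexes: F = F_1 + ... + F_n where
P = {b_1, ..., b_n} and Fate(b_i, F_i) for each i. -/
def FateM (R : Set (Rxn C)) (P : Multiset C) (F : Multiset (Set C)) : Prop :=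
  ∃ l : List (C × Multiset (Set C)),
    P = (↑(l.map Prod.fst) : Multiset C) ∧
    F = (l.map Prod.snd).sum ∧
    ∀ p ∈ l, Fate R p.1 p.2

/-- The condensed reactions: for each slow reaction ({a₁, a₂}, P) ∈ R and each fate F
of P, the condensed reaction ({SCC(a₁), SCC(a₂)}, F). -/
def IsCondensed (R : Set (Rxn C)) (Ahat Bhat : Multiset (Set C)) : Prop :=
  ∃ (a1 a2 : C) (P : Multiset C),
    ((({a1, a2} : Multiset C), P) : Rxn C) ∈ R ∧
    Ahat = ({scc R a1, scc R a2} : Multiset (Set C)) ∧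
    FateM R P Bhat

/-- Every reaction in R is fast (unimolecular) or slow (bimolecular). -/
def FastOrSlow (R : Set (Rxn C)) : Prop :=
  ∀ r ∈ R, r.1.card = 1 ∨ r.1.card = 2

/-- Reactants and products of every reaction are nonempty. -/
def NonemptyRxns (R : Set (Rxn C)) : Prop :=
  ∀ r ∈ R, r.1 ≠ 0 ∧ r.2 ≠ 0

/-- Property 3: every finite cyclic sequence of fast reactions, in which each reaction
consumes a product of the previous one (cyclically), consists of (1,1) reactions only. -/
def Prop3 (R : Set (Rxn C)) : Prop :=
  ∀ (n : ℕ) (hn : 0 < n) (r : Fin n → Rxn C),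
    (∀ i, r i ∈ R ∧ (r i).1.card = 1) →
    (∀ i : Fin n, ∀ a ∈ (r ⟨(i.1 + 1) % n, Nat.mod_lt _ hn⟩).1, a ∈ (r i).2) →
    ∀ i, (r i).2.card = 1

/-- Property 4: both reactants of every slow reaction are resting complexes. -/
def Prop4 (R : Set (Rxn C)) : Prop :=
  ∀ r ∈ R, r.1.card = 2 → ∀ a ∈ r.1, RestingComplex R a

/-- A resting-state transition from {a₁, a₂} to B: a slow reaction ({a₁, a₂}, P) ∈ R
followed by a fast transition from P to B. -/
def RestingTransition (R : Set (Rxn C)) (a1 a2 : C) (B : Multiset C) : Prop :=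
  ∃ P : Multiset C, ((({a1, a2} : Multiset C), P) : Rxn C) ∈ R ∧ FastTransition R P B

/-- One step of a sequence of detailed reactions: remove the reactants of some
reaction in R from the current multiset and add its products. -/
def DetailedStep (R : Set (Rxn C)) (M N : Multiset C) : Prop :=
  ∃ r ∈ R, ∃ M' : Multiset C, M = r.1 + M' ∧ N = r.2 + M'

/-- One step of a sequence of condensed reactions: remove the reactant multiset of a
condensed reaction from the current multiset of resting sets and add its products. -/
def CondensedStep (R : Set (Rxn C)) (M N : Multiset (Set C)) : Prop :=
  ∃ Ahat Bhat M' : Multiset (Set C),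
    IsCondensed R Ahat Bhat ∧ M = Ahat + M' ∧ N = Bhat + M'


section Aux

variable {C : Type*}

lemma mem_scc_self (R : Set (Rxn C)) (x : C) : x ∈ scc R x :=
  ⟨Relation.ReflTransGen.refl, Relation.ReflTransGen.refl⟩

lemma scc_eq_of_mem {R : Set (Rxn C)} {x y : C} (h : y ∈ scc R x) :
    scc R y = scc R x := by
  obtain ⟨hxy, hyx⟩ := h
  ext z
  exact ⟨fun ⟨h1, h2⟩ => ⟨hxy.trans h1, h2.trans hyx⟩,
    fun ⟨h1, h2⟩ => ⟨hyx.trans h1, h2.trans hxy⟩⟩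

lemma restingComplex_scc {R : Set (Rxn C)} {a : C} (h : RestingComplex R a) :
    IsRestingSet R (scc R a) := by
  obtain ⟨Q, hQ, haQ⟩ := h
  obtain ⟨x, rfl⟩ := hQ.1
  rwa [scc_eq_of_mem haQ]

lemma fate_congr {R : Set (Rxn C)} {x y : C} (h : scc R x = scc R y)
    {F : Multiset (Set C)} (hf : Fate R y F) : Fate R x F := by
  cases hf with
  | resting _ hy => rw [← h] at hy ⊢; exact Fate.resting x hy
  | step _ a l hnr ha hr hout hf =>
      rw [← h] at hnr ha hout
      exact Fate.step x a l hnr ha hr hout hf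

lemma fate_resting {R : Set (Rxn C)} {x : C} (h : IsRestingSet R (scc R x))
    {F : Multiset (Set C)} (hf : Fate R x F) : F = {scc R x} := by
  cases hf with
  | resting => rfl
  | step _ a l hnr => exact absurd h hnr

lemma sum_singletons {α β : Type*} (f : α → β) :
    ∀ l : List α, ((l.map fun a => ({f a} : Multiset β)).sum : Multiset β) = ↑(l.map f)
  | [] => rfl
  | a :: l => by
      simp only [List.map_cons, List.sum_cons, sum_singletons f l]
      rw [← Multiset.cons_coe, Multiset.singleton_add]

lemma fateM_zero {R : Set (Rxn C)} {F : Multiset (Set C)} (h : FateM R 0 F) : F = 0 := by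
  obtain ⟨l, hl, hF, _⟩ := h
  have : l.map Prod.fst = [] := by
    have := hl.symm
    rwa [Multiset.coe_eq_zero] at this
  have : l = [] := List.map_eq_nil_iff.mp this
  simp [this] at hF
  exact hF

lemma fateM_zero' (R : Set (Rxn C)) : FateM R (0 : Multiset C) 0 :=
  ⟨[], rfl, rfl, by simp⟩

lemma fateM_cons {R : Set (Rxn C)} {x : C} {P : Multiset C}
    {Fx F : Multiset (Set C)} (hx : Fate R x Fx) (hP : FateM R P F) :
    FateM R (x ::ₘ P) (Fx + F) := by
  obtain ⟨l, rfl, rfl, hl⟩ := hP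
  exact ⟨(x, Fx) :: l, by simp [Multiset.cons_coe], by simp,
    List.forall_mem_cons.mpr ⟨hx, hl⟩⟩

lemma fateM_cons_split {R : Set (Rxn C)} {x : C} {P : Multiset C}
    {F : Multiset (Set C)} (h : FateM R (x ::ₘ P) F) :
    ∃ Fx FP, Fate R x Fx ∧ FateM R P FP ∧ F = Fx + FP := by
  obtain ⟨l, hl, hF, hfate⟩ := h
  have hx : x ∈ l.map Prod.fst := by
    rw [← Multiset.mem_coe, ← hl]; exact Multiset.mem_cons_self _ _
  obtain ⟨p, hp, hpx⟩ := List.mem_map.mp hx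
  obtain ⟨l1, l2, rfl⟩ := List.append_of_mem hp
  refine ⟨p.2, ((l1 ++ l2).map Prod.snd).sum, hpx ▸ hfate p hp, ⟨l1 ++ l2, ?_, rfl, ?_⟩, ?_⟩
  · -- P = map fst (l1 ++ l2)
    have : (↑((l1 ++ p :: l2).map Prod.fst) : Multiset C) = x ::ₘ ↑((l1 ++ l2).map Prod.fst) := by
      simp only [List.map_append, List.map_cons, hpx]
      rw [← Multiset.coe_add, ← Multiset.coe_add, ← Multiset.cons_coe]
      rw [← Multiset.singleton_add, ← Multiset.singleton_add]
      rw [add_left_comm]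
    rw [this] at hl
    exact (Multiset.cons_inj_right x).mp hl
  · intro q hq
    exact hfate q (by simp at hq ⊢; tauto)
  · rw [hF]
    simp only [List.map_append, List.map_cons, List.sum_append, List.sum_cons]
    rw [add_left_comm]

lemma fateM_add_split {R : Set (Rxn C)} {P Q : Multiset C} :
    ∀ {F : Multiset (Set C)}, FateM R (P + Q) F →
      ∃ F1 F2, FateM R P F1 ∧ FateM R Q F2 ∧ F = F1 + F2 := by
  induction P using Multiset.induction_on with
  | empty =>
      intro F h
      rw [zero_add] at h
      exact ⟨0, F, fateM_zero' R, h, (zero_add F).symm⟩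
  | cons x P ih =>
      intro F h
      rw [Multiset.cons_add] at h
      obtain ⟨Fx, FP, hx, hP, rfl⟩ := fateM_cons_split h
      obtain ⟨F1, F2, h1, h2, rfl⟩ := ih hP
      exact ⟨Fx + F1, F2, fateM_cons hx h1, h2, (add_assoc _ _ _).symm⟩

lemma fateM_singleton {R : Set (Rxn C)} {x : C} {F : Multiset (Set C)}
    (h : FateM R ({x} : Multiset C) F) : Fate R x F := by
  have : FateM R (x ::ₘ 0) F := by rwa [Multiset.cons_zero]
  obtain ⟨Fx, FP, hx, hP, rfl⟩ := fateM_cons_split this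
  rw [fateM_zero hP, add_zero]
  exact hx

/-- Property 3 consequence: a fast reaction all of whose products reach back to the
reactant is a (1,1) reaction. -/
lemma card_one_of_products_reach {R : Set (Rxn C)} (h3 : Prop3 R) (hne : NonemptyRxns R)
    {x : C} {P : Multiset C} (hxP : ((({x} : Multiset C), P) : Rxn C) ∈ R)
    (hall : ∀ b ∈ P, Reach R b x) : Multiset.card P = 1 := by
  have hPne : P ≠ 0 := (hne _ hxP).2
  obtain ⟨p, hp⟩ := Multiset.exists_mem_of_ne_zero hPne
  obtain ⟨l, hchain, hlast⟩ := List.exists_isChain_cons_of_relationReflTransGen (hall p hp)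
  have hchain' : List.IsChain (FastEdge R) (p :: l) := hchain
  set L : List C := p :: l with hL
  have hLne : L ≠ [] := by simp [hL]
  set n : ℕ := L.length with hn
  have hn0 : 0 < n := by simp [hn, hL]
  have hget : ∀ (i : ℕ) (h : i < n - 1),
      FastEdge R (L.get ⟨i, by omega⟩) (L.get ⟨i + 1, by omega⟩) := by
    exact fun i h => List.isChain_iff_getElem.mp hchain' i (by omega)
  have hlast' : L.get ⟨n - 1, by omega⟩ = x := by
    rw [← hlast]
    exact (List.getLast_eq_getElem hLne).symm
  set r : Fin n → Rxn C := fun i =>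
    if h : i.1 + 1 < n then
      ((({L.get ⟨i.1, i.2⟩} : Multiset C), ({L.get ⟨i.1 + 1, h⟩} : Multiset C)) : Rxn C)
    else ((({x} : Multiset C), P) : Rxn C) with hr
  have hfst : ∀ i : Fin n, (r i).1 = ({L.get ⟨i.1, i.2⟩} : Multiset C) := by
    intro i
    by_cases h : i.1 + 1 < n
    · simp [hr, h]
    · have hi : i.1 = n - 1 := by omega
      simp only [hr, dif_neg h]
      congr 1
      rw [show (⟨i.1, i.2⟩ : Fin L.length) = ⟨n - 1, by omega⟩ by simp [hi], hlast']
  have hmem : ∀ i, r i ∈ R ∧ Multiset.card (r i).1 = 1 := by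
    intro i
    by_cases h : i.1 + 1 < n
    · constructor
      · have := hget i.1 (by omega)
        simpa [hr, dif_pos h, FastEdge] using this
      · simp [hr, dif_pos h]
    · constructor
      · simpa [hr, dif_neg h] using hxP
      · simp [hr, dif_neg h]
  have hcons : ∀ i : Fin n, ∀ a ∈ (r ⟨(i.1 + 1) % n, Nat.mod_lt _ hn0⟩).1,
      a ∈ (r i).2 := by
    intro i a ha
    rw [hfst] at ha
    rw [Multiset.mem_singleton] at ha
    subst ha
    by_cases h : i.1 + 1 < n
    · have hmod : (i.1 + 1) % n = i.1 + 1 := Nat.mod_eq_of_lt h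
      simp only [hr, dif_pos h, Multiset.mem_singleton]
      congr 1
      simp [hmod]
    · have hi : i.1 = n - 1 := by omega
      have hmod : (i.1 + 1) % n = 0 := by
        have : i.1 + 1 = n := by omega
        simp [this]
      simp only [hr, dif_neg h]
      have : L.get ⟨(i.1 + 1) % n, Nat.mod_lt _ hn0⟩ = p := by
        simp only [hmod]
        rfl
      rw [this]
      exact hp
  have := h3 n hn0 r hmem hcons ⟨n - 1, by omega⟩
  have hlastr : r ⟨n - 1, by omega⟩ = ((({x} : Multiset C), P) : Rxn C) := by
    have h : ¬ ((⟨n - 1, by omega⟩ : Fin n).1 + 1 < n) := by simp; omega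
    simp [hr, dif_neg h]
  rwa [hlastr] at this

/-- Key lemma: a fate of the product multiset of a fast reaction is a fate of its
reactant. -/
lemma fate_of_fast {R : Set (Rxn C)} (h3 : Prop3 R) (hne : NonemptyRxns R)
    {x : C} {P : Multiset C} (hxP : ((({x} : Multiset C), P) : Rxn C) ∈ R)
    {F : Multiset (Set C)} (hF : FateM R P F) : Fate R x F := by
  by_cases hout : ∃ b ∈ P, b ∉ scc R x
  · -- some product escapes the SCC: use the step constructor
    have hnr : ¬ IsRestingSet R (scc R x) := by
      rintro ⟨-, hclosed⟩
      obtain ⟨b, hbP, hbn⟩ := hout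
      exact hbn (hclosed _ hxP (by simp) (by
        intro a ha
        rw [Multiset.mem_singleton] at ha
        exact ha ▸ mem_scc_self R x) b hbP)
    obtain ⟨l, hl, rfl, hfate⟩ := hF
    refine Fate.step x x l hnr (mem_scc_self R x) (by rwa [← hl]) ?_ hfate
    obtain ⟨b, hbP, hbn⟩ := hout
    exact ⟨b, by rw [← Multiset.mem_coe, ← hl]; exact hbP, hbn⟩
  · -- all products stay in the SCC: Property 3 forces a (1,1) reaction
    push_neg at hout
    have hcard : Multiset.card P = 1 :=
      card_one_of_products_reach h3 hne hxP (fun b hb => (hout b hb).2)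
    obtain ⟨y, rfl⟩ := Multiset.card_eq_one.mp hcard
    have hy : y ∈ scc R x := hout y (Multiset.mem_singleton_self y)
    exact fate_congr (scc_eq_of_mem hy).symm (fateM_singleton hF)

lemma fateM_resting {R : Set (Rxn C)} {M : Multiset C}
    (hM : ∀ a ∈ M, RestingComplex R a) {F : Multiset (Set C)} (h : FateM R M F) :
    F = M.map (scc R) := by
  obtain ⟨l, rfl, rfl, hfate⟩ := h
  have : ∀ p ∈ l, p.2 = ({scc R p.1} : Multiset (Set C)) := by
    intro p hp
    refine fate_resting ?_ (hfate p hp)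
    exact restingComplex_scc (hM p.1 (by
      rw [← Multiset.mem_coe] at *
      exact Multiset.mem_coe.mpr (List.mem_map.mpr ⟨p, hp, rfl⟩)))
  calc (l.map Prod.snd).sum
      = (l.map fun p => ({scc R p.1} : Multiset (Set C))).sum := by
        congr 1
        exact List.map_congr_left this
    _ = ↑(l.map fun p => scc R p.1) := sum_singletons _ l
    _ = Multiset.map (scc R) ↑(l.map Prod.fst) := by
        rw [Multiset.map_coe, List.map_map]
        rfl

lemma fateM_self {R : Set (Rxn C)} {M : Multiset C}
    (hM : ∀ a ∈ M, RestingComplex R a) : FateM R M (M.map (scc R)) := by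
  refine ⟨M.toList.map fun b => (b, ({scc R b} : Multiset (Set C))), ?_, ?_, ?_⟩
  · rw [List.map_map]
    have : (Prod.fst ∘ fun b => (b, ({scc R b} : Multiset (Set C)))) = id := rfl
    rw [this, List.map_id, Multiset.coe_toList]
  · rw [List.map_map]
    have : (Prod.snd ∘ fun b => (b, ({scc R b} : Multiset (Set C))))
        = fun b => ({scc R b} : Multiset (Set C)) := rfl
    rw [this, sum_singletons, ← Multiset.map_coe, Multiset.coe_toList]
  · intro p hp
    obtain ⟨a, ha, rfl⟩ := List.mem_map.mp hp
    exact Fate.resting a (restingComplex_scc (hM a (by rwa [← Multiset.mem_toList])))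

end Aux

/-- Corollary 2: any sequence of detailed reactions from a multiset A of resting
complexes to a multiset B of resting complexes is represented by a sequence of
condensed reactions from Â = {SCC(a) : a ∈ A} to some B̂ with B ~ B̂. -/
theorem detailed_seq_to_condensed_seq {C : Type*} [Fintype C] (R : Set (Rxn C))
    (hRfin : R.Finite) (hne : NonemptyRxns R) (hfs : FastOrSlow R)
    (h3 : Prop3 R) (h4 : Prop4 R)
    (A B : Multiset C)
    (hA : ∀ a ∈ A, RestingComplex R a) (hB : ∀ b ∈ B, RestingComplex R b)
    (hseq : Relation.ReflTransGen (DetailedStep R) A B) :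
    ∃ Bhat : Multiset (Set C),
      Represents B Bhat ∧
      Relation.ReflTransGen (CondensedStep R) (A.map (scc R)) Bhat := by
  have key : ∀ M, Relation.ReflTransGen (DetailedStep R) A M →
      ∀ F, FateM R M F →
        Relation.ReflTransGen (CondensedStep R) (A.map (scc R)) F := by
    intro M h
    induction h with
    | refl =>
        intro F hF
        rw [fateM_resting hA hF]
    | @tail M N hAM step ih =>
        intro F hF
        obtain ⟨r, hrR, M', hM, hN⟩ := step
        rcases hfs r hrR with h1 | h2
        · -- fast reaction
          obtain ⟨x, hx⟩ := Multiset.card_eq_one.mp h1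
          rw [hN] at hF
          obtain ⟨F1, F2, hF1, hF2, rfl⟩ := fateM_add_split hF
          have hxP : ((({x} : Multiset C), r.2) : Rxn C) ∈ R := by
            rw [← hx]; exact hrR
          have hfx : Fate R x F1 := fate_of_fast h3 hne hxP hF1
          apply ih
          rw [hM, hx, Multiset.singleton_add]
          exact fateM_cons hfx hF2
        · -- slow reaction
          obtain ⟨a1, a2, ha⟩ := Multiset.card_eq_two.mp h2
          rw [hN] at hF
          obtain ⟨F1, F2, hF1, hF2, rfl⟩ := fateM_add_split hF
          have hr' : ((({a1, a2} : Multiset C), r.2) : Rxn C) ∈ R := by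
            rw [← ha]; exact hrR
          have hrest : ∀ a ∈ ({a1, a2} : Multiset C), RestingComplex R a := by
            intro a haa
            exact h4 r hrR h2 a (ha ▸ haa)
          have h1r : IsRestingSet R (scc R a1) :=
            restingComplex_scc (hrest a1 (by simp))
          have h2r : IsRestingSet R (scc R a2) :=
            restingComplex_scc (hrest a2 (by simp))
          have hG : FateM R M (({scc R a1, scc R a2} : Multiset (Set C)) + F2) := by
            rw [hM, ha]
            have : ({a1, a2} : Multiset C) + M' = a1 ::ₘ a2 ::ₘ M' := by
              rw [Multiset.insert_eq_cons, Multiset.cons_add, Multiset.singleton_add]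
            rw [this]
            have : ({scc R a1, scc R a2} : Multiset (Set C)) + F2
                = ({scc R a1} : Multiset (Set C)) + (({scc R a2} : Multiset (Set C)) + F2) := by
              rw [Multiset.insert_eq_cons, ← Multiset.singleton_add, add_assoc]
            rw [this]
            rw [← Multiset.singleton_add, ← Multiset.singleton_add,
              Multiset.singleton_add, Multiset.singleton_add]
            exact fateM_cons (Fate.resting a1 h1r) (fateM_cons (Fate.resting a2 h2r) hF2)
          refine Relation.ReflTransGen.tail (ih _ hG) ?_
          exact ⟨{scc R a1, scc R a2}, F1, F2, ⟨a1, a2, r.2, hr', rfl, hF1⟩, rfl, rfl⟩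
  refine ⟨B.map (scc R), ?_, key B hseq _ (fateM_self hB)⟩
  exact Multiset.rel_map_right.mpr
    (Multiset.rel_refl_of_refl_on fun b _ => mem_scc_self R b)
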